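/- Let p ≠ 2 be a prime, T ∈ M_n(𝔽_p), and consider the quadratic form Q(U) = Tr(TU²) on M_n(𝔽_p). Then the dimension of the radical of the associated bilinear form B(U,Y) = Tr(T(UY + YU)) equals dim{Y ∈ M_n(𝔽_p) : TY + YT = 0}, and consequently for any S ∈ M_n(𝔽_p), |Σ_{U ∈ M_n(𝔽_p)} e^{2πi Tr(SU + TU²)/p}| ≤ p^{n²} · p^{-(n² - K)/2} where K = dim{Y : TY + YT = 0}. -/

import Mathlib

/-- The radical of the bilinear form `(U, Y) ↦ Tr (T * (U * Y + Y * U))` on matrices. -/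
def radSubmodule (p n : ℕ) (T : Matrix (Fin n) (Fin n) (ZMod p)) :
    Submodule (ZMod p) (Matrix (Fin n) (Fin n) (ZMod p)) where
  carrier := {Y | ∀ U, Matrix.trace (T * (U * Y + Y * U)) = 0}
  zero_mem' := by intro U; simp
  add_mem' := by
    intro a b ha hb U
    have h1 := ha U
    have h2 := hb U
    simp only [mul_add, add_mul, Matrix.trace_add] at h1 h2 ⊢
    linear_combination h1 + h2
  smul_mem' := by
    intro c a ha U
    have h1 := ha U
    simp only [mul_add, add_mul, Matrix.trace_add, Matrix.mul_smul, Matrix.smul_mul,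
      Matrix.trace_smul, smul_eq_mul] at h1 ⊢
    linear_combination c * h1

noncomputable section Stmt19Aux

open Complex Finset

/-- The standard additive character of `ZMod p` with values in `ℂ`. -/
def psiC (p : ℕ) [NeZero p] : AddChar (ZMod p) ℂ where
  toFun x := Complex.exp (2 * Real.pi * Complex.I * (x.val : ℂ) / p)
  map_zero_eq_one' := by
    show Complex.exp _ = 1
    rw [ZMod.val_zero]
    simp
  map_add_eq_mul' := by
    intro a b
    show Complex.exp _ = Complex.exp _ * Complex.exp _
    have hp : (p : ℂ) ≠ 0 := Nat.cast_ne_zero.2 (NeZero.ne p)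
    rw [← Complex.exp_add]
    have h : ((a + b).val : ℂ) + p * ((a.val + b.val) / p : ℕ) = (a.val : ℂ) + b.val := by
      rw [ZMod.val_add]
      exact_mod_cast Nat.mod_add_div (a.val + b.val) p
    have key : 2 * (Real.pi:ℂ) * Complex.I * ((a+b).val : ℂ) / p
          + (((a.val + b.val) / p : ℕ) : ℂ) * (2 * Real.pi * Complex.I)
        = 2 * Real.pi * Complex.I * (a.val : ℂ) / p + 2 * Real.pi * Complex.I * (b.val : ℂ) / p := by
      revert h
      generalize ((a+b).val : ℂ) = X
      generalize (a.val : ℂ) = A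
      generalize (b.val : ℂ) = B
      generalize (((a.val + b.val) / p : ℕ) : ℂ) = K
      intro h
      field_simp
      linear_combination h
    rw [← key, Complex.exp_add, Complex.exp_nat_mul_two_pi_mul_I, mul_one]

lemma psiC_apply (p : ℕ) [NeZero p] (x : ZMod p) :
    psiC p x = Complex.exp (2 * Real.pi * Complex.I * (x.val : ℂ) / p) := rfl

lemma abs_psiC (p : ℕ) [NeZero p] (x : ZMod p) : ‖psiC p x‖ = 1 := by
  rw [psiC_apply, show 2 * (Real.pi:ℂ) * Complex.I * (x.val : ℂ) / p
      = ((2 * Real.pi * (x.val : ℝ) / p : ℝ) : ℂ) * Complex.I by push_cast; ring]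
  exact Complex.norm_exp_ofReal_mul_I _

lemma psiC_eq_one_iff (p : ℕ) [NeZero p] (x : ZMod p) : psiC p x = 1 ↔ x = 0 := by
  constructor
  · intro h
    rw [psiC_apply, Complex.exp_eq_one_iff] at h
    obtain ⟨k, hk⟩ := h
    have hp : (p : ℂ) ≠ 0 := Nat.cast_ne_zero.2 (NeZero.ne p)
    have hne : (2 * (Real.pi:ℂ) * Complex.I) ≠ 0 := by
      simp [Real.pi_ne_zero, Complex.I_ne_zero]
    have h2 : ((x.val : ℂ)) = (k : ℂ) * p := by
      have h1 := mul_left_cancel₀ hne (show (2 * (Real.pi:ℂ) * Complex.I) * ((x.val:ℂ)/p)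
        = (2 * (Real.pi:ℂ) * Complex.I) * k by linear_combination hk)
      exact (div_eq_iff hp).mp h1
    have h3 : (x.val : ℤ) = k * p := by exact_mod_cast h2
    have hv : (x.val : ℤ) < p := by exact_mod_cast ZMod.val_lt x
    have hnn : (0:ℤ) ≤ (x.val : ℤ) := by positivity
    have hp1 : (0:ℤ) < p := by exact_mod_cast Nat.pos_of_ne_zero (NeZero.ne p)
    have hk0 : k = 0 := by
      by_contra hc
      rcases lt_or_gt_of_ne hc with hneg | hpos
      · nlinarith
      · nlinarith
    rw [hk0, zero_mul] at h3
    have : x.val = 0 := by exact_mod_cast h3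
    exact (ZMod.val_eq_zero x).mp this
  · intro h; subst h; exact AddChar.map_zero_eq_one _

lemma conj_psiC (p : ℕ) [NeZero p] (x : ZMod p) :
    (starRingEnd ℂ) (psiC p x) = psiC p (-x) := by
  have h1 : psiC p x * psiC p (-x) = 1 := by
    rw [← AddChar.map_add_eq_mul]; simp
  have h2 : psiC p x * (starRingEnd ℂ) (psiC p x) = 1 := by
    rw [Complex.mul_conj]
    norm_cast
    rw [Complex.normSq_eq_norm_sq, abs_psiC, one_pow]
  have hne : psiC p x ≠ 0 := fun h => by simpa [h] using abs_psiC p x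
  exact mul_left_cancel₀ hne (h2.trans h1.symm)

lemma mem_radSubmodule_iff (p n : ℕ) (T Y : Matrix (Fin n) (Fin n) (ZMod p)) :
    Y ∈ radSubmodule p n T ↔ ∀ U, Matrix.trace (T * (U * Y + Y * U)) = 0 := Iff.rfl

lemma trace_mul_std (p n : ℕ) (M : Matrix (Fin n) (Fin n) (ZMod p)) (i j : Fin n) :
    Matrix.trace (M * Matrix.single j i 1) = M i j := by
  simp [Matrix.trace, Matrix.diag, Matrix.mul_apply, Matrix.single,
    Matrix.of_apply, Finset.sum_ite_eq, ite_and]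

lemma trace_comm3 (p n : ℕ) (T U Y : Matrix (Fin n) (Fin n) (ZMod p)) :
    Matrix.trace (T * (U * Y + Y * U)) = Matrix.trace ((T * Y + Y * T) * U) := by
  simp only [Matrix.mul_add, Matrix.add_mul, Matrix.trace_add, ← Matrix.mul_assoc]
  rw [Matrix.trace_mul_cycle T U Y]
  ring

lemma rad_eq (p n : ℕ) (T : Matrix (Fin n) (Fin n) (ZMod p)) :
    radSubmodule p n T
      = LinearMap.ker (LinearMap.mulLeft (ZMod p) T + LinearMap.mulRight (ZMod p) T) := by
  ext Y
  rw [mem_radSubmodule_iff, LinearMap.mem_ker, LinearMap.add_apply, LinearMap.mulLeft_apply,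
    LinearMap.mulRight_apply]
  constructor
  · intro h
    ext i j
    have h2 : Matrix.trace ((T * Y + Y * T) * Matrix.single j i 1) = 0 := by
      rw [← trace_comm3]; exact h _
    rw [trace_mul_std] at h2
    simpa using h2
  · intro h U
    rw [trace_comm3, h, Matrix.zero_mul, Matrix.trace_zero]

lemma card_matrix (p n : ℕ) [NeZero p] :
    Fintype.card (Matrix (Fin n) (Fin n) (ZMod p)) = p ^ (n ^ 2) := by
  rw [show Fintype.card (Matrix (Fin n) (Fin n) (ZMod p))
      = Fintype.card (Fin n → Fin n → ZMod p) from rfl]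
  simp [ZMod.card, ← pow_mul, sq]

lemma main_bound (p n : ℕ) [Fact p.Prime]
    (T S : Matrix (Fin n) (Fin n) (ZMod p)) :
    ‖(∑ U : Matrix (Fin n) (Fin n) (ZMod p),
        psiC p (Matrix.trace (S * U + T * (U * U))))‖ ^ 2
      ≤ (p : ℝ) ^ (n ^ 2) * (p : ℝ) ^ (Module.finrank (ZMod p) (radSubmodule p n T)) := by
  haveI : NeZero p := ⟨(Fact.out : p.Prime).ne_zero⟩
  classical
  set f : Matrix (Fin n) (Fin n) (ZMod p) → ZMod p :=
    fun U => Matrix.trace (S * U + T * (U * U)) with hf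
  set Sg := ∑ U : Matrix (Fin n) (Fin n) (ZMod p), psiC p (f U) with hSg
  have h1 : Sg * (starRingEnd ℂ) Sg
      = ∑ Y : Matrix (Fin n) (Fin n) (ZMod p),
          (psiC p (Matrix.trace (S * Y + T * (Y * Y))) *
            ∑ V : Matrix (Fin n) (Fin n) (ZMod p),
              psiC p (Matrix.trace (T * (V * Y + Y * V)))) := by
    have hconj : (starRingEnd ℂ) Sg
        = ∑ V : Matrix (Fin n) (Fin n) (ZMod p), psiC p (-(f V)) := by
      rw [hSg, map_sum]
      exact Finset.sum_congr rfl fun V _ => conj_psiC p _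
    rw [hconj, hSg, Finset.sum_mul_sum]
    rw [Finset.sum_comm]
    calc (∑ V : Matrix (Fin n) (Fin n) (ZMod p), ∑ U : Matrix (Fin n) (Fin n) (ZMod p),
            psiC p (f U) * psiC p (-(f V)))
        = ∑ V : Matrix (Fin n) (Fin n) (ZMod p), ∑ Y : Matrix (Fin n) (Fin n) (ZMod p),
            psiC p (f (V + Y)) * psiC p (-(f V)) := by
          refine Finset.sum_congr rfl fun V _ => ?_
          exact (Fintype.sum_equiv (Equiv.addLeft V) _ _ (fun Y => rfl)).symm
      _ = ∑ Y : Matrix (Fin n) (Fin n) (ZMod p), ∑ V : Matrix (Fin n) (Fin n) (ZMod p),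
            psiC p (f (V + Y)) * psiC p (-(f V)) := Finset.sum_comm
      _ = _ := by
          refine Finset.sum_congr rfl fun Y _ => ?_
          rw [Finset.mul_sum]
          refine Finset.sum_congr rfl fun V _ => ?_
          rw [← AddChar.map_add_eq_mul, ← AddChar.map_add_eq_mul]
          congr 1
          simp only [hf, Matrix.mul_add, Matrix.add_mul, Matrix.trace_add]
          ring
  have h3 : ∀ Y : Matrix (Fin n) (Fin n) (ZMod p),
      (∑ V : Matrix (Fin n) (Fin n) (ZMod p), psiC p (Matrix.trace (T * (V * Y + Y * V))))
        = if Y ∈ radSubmodule p n T then ((p : ℂ) ^ (n ^ 2)) else 0 := by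
    intro Y
    by_cases hY : Y ∈ radSubmodule p n T
    · rw [if_pos hY]
      have hone : ∀ V : Matrix (Fin n) (Fin n) (ZMod p),
          psiC p (Matrix.trace (T * (V * Y + Y * V))) = 1 := fun V => by
        rw [(mem_radSubmodule_iff p n T Y).mp hY V, AddChar.map_zero_eq_one]
      rw [Finset.sum_congr rfl (fun V _ => hone V), Finset.sum_const, Finset.card_univ,
        card_matrix p n, nsmul_eq_mul, mul_one]
      push_cast
      ring
    · rw [if_neg hY]
      set F : Matrix (Fin n) (Fin n) (ZMod p) →+ ZMod p :=
        { toFun := fun V => Matrix.trace (T * (V * Y + Y * V)),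
          map_zero' := by simp,
          map_add' := by
            intro a b
            simp only [Matrix.mul_add, Matrix.add_mul, Matrix.trace_add]
            ring } with hF
      have hne : (psiC p).compAddMonoidHom F ≠ 0 := by
        rw [AddChar.ne_zero_iff]
        obtain ⟨U, hU⟩ := not_forall.mp (fun hall => hY ((mem_radSubmodule_iff p n T Y).mpr hall))
        refine ⟨U, fun hc => hU ?_⟩
        have : psiC p (F U) = 1 := hc
        exact (psiC_eq_one_iff p _).mp this
      have := AddChar.sum_eq_zero_iff_ne_zero.mpr hne
      simpa [hF] using this
  have h4 : Sg * (starRingEnd ℂ) Sg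
      = ∑ Y : Matrix (Fin n) (Fin n) (ZMod p),
          if Y ∈ radSubmodule p n T then
            psiC p (Matrix.trace (S * Y + T * (Y * Y))) * (p : ℂ) ^ (n ^ 2) else 0 := by
    rw [h1]
    refine Finset.sum_congr rfl fun Y _ => ?_
    rw [h3 Y]
    split_ifs <;> simp
  haveI : Fintype (radSubmodule p n T) := Fintype.ofFinite _
  have habs : ‖Sg‖ ^ 2 = ‖Sg * (starRingEnd ℂ) Sg‖ := by
    rw [norm_mul, Complex.norm_conj, sq]
  have h5 : ‖Sg * (starRingEnd ℂ) Sg‖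
      ≤ (Fintype.card (radSubmodule p n T) : ℝ) * (p : ℝ) ^ (n ^ 2) := by
    rw [h4]
    refine le_trans (norm_sum_le _ _) ?_
    have step : ∀ Y : Matrix (Fin n) (Fin n) (ZMod p),
        ‖(if Y ∈ radSubmodule p n T then
            psiC p (Matrix.trace (S * Y + T * (Y * Y))) * (p : ℂ) ^ (n ^ 2) else 0)‖
          = if Y ∈ radSubmodule p n T then ((p : ℝ) ^ (n ^ 2)) else 0 := by
      intro Y
      split_ifs with h
      · rw [norm_mul, abs_psiC, one_mul, norm_pow, Complex.norm_natCast]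
      · simp
    rw [Finset.sum_congr rfl (fun Y _ => step Y), ← Finset.sum_filter, Finset.sum_const,
      nsmul_eq_mul]
    have hcf : (Finset.filter (fun a => a ∈ radSubmodule p n T) Finset.univ).card
        = Fintype.card (radSubmodule p n T) :=
      (Fintype.card_of_subtype _ (fun x => by simp)).symm
    rw [hcf]
  have hcardrad : (Fintype.card (radSubmodule p n T) : ℝ)
      = (p : ℝ) ^ (Module.finrank (ZMod p) (radSubmodule p n T)) := by
    have h := Module.card_eq_pow_finrank (K := ZMod p) (V := radSubmodule p n T)
    rw [ZMod.card] at h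
    rw [h]
    push_cast
    ring
  calc ‖Sg‖ ^ 2 = ‖Sg * (starRingEnd ℂ) Sg‖ := habs
    _ ≤ (Fintype.card (radSubmodule p n T) : ℝ) * (p : ℝ) ^ (n ^ 2) := h5
    _ = (p : ℝ) ^ (n ^ 2) * (p : ℝ) ^ (Module.finrank (ZMod p) (radSubmodule p n T)) := by
        rw [hcardrad]; ring

end Stmt19Aux

theorem stmt_19 (p n : ℕ) [Fact p.Prime] (hp2 : p ≠ 2)
    (T : Matrix (Fin n) (Fin n) (ZMod p)) :
    Module.finrank (ZMod p) (radSubmodule p n T)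
      = Module.finrank (ZMod p)
          (LinearMap.ker (LinearMap.mulLeft (ZMod p) T + LinearMap.mulRight (ZMod p) T)) ∧
    ∀ S : Matrix (Fin n) (Fin n) (ZMod p),
      ‖(∑ U : Matrix (Fin n) (Fin n) (ZMod p),
        Complex.exp (2 * Real.pi * Complex.I *
          ((Matrix.trace (S * U + T * (U * U))).val : ℂ) / p))‖
      ≤ (p : ℝ) ^ (n ^ 2) *
          (p : ℝ) ^ (-(((n ^ 2 : ℝ) -
            (Module.finrank (ZMod p)
              (LinearMap.ker (LinearMap.mulLeft (ZMod p) T + LinearMap.mulRight (ZMod p) T)) : ℝ)) / 2)) := by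
  haveI : NeZero p := ⟨(Fact.out : p.Prime).ne_zero⟩
  have hrad := rad_eq p n T
  refine ⟨by rw [hrad], fun S => ?_⟩
  have hb := main_bound p n T S
  rw [hrad] at hb
  set K := Module.finrank (ZMod p)
      (LinearMap.ker (LinearMap.mulLeft (ZMod p) T + LinearMap.mulRight (ZMod p) T)) with hK
  have hsum : (∑ U : Matrix (Fin n) (Fin n) (ZMod p),
        Complex.exp (2 * Real.pi * Complex.I *
          ((Matrix.trace (S * U + T * (U * U))).val : ℂ) / p))
      = ∑ U : Matrix (Fin n) (Fin n) (ZMod p),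
          psiC p (Matrix.trace (S * U + T * (U * U))) := rfl
  rw [hsum]
  set A := ‖(∑ U : Matrix (Fin n) (Fin n) (ZMod p),
      psiC p (Matrix.trace (S * U + T * (U * U))))‖ with hA
  have hp0 : (0 : ℝ) < p := by exact_mod_cast Nat.pos_of_ne_zero (NeZero.ne p)
  have hA0 : (0 : ℝ) ≤ A := norm_nonneg _
  set B := (p : ℝ) ^ (n ^ 2) * (p : ℝ) ^ (-(((n ^ 2 : ℝ) - (K : ℝ)) / 2)) with hB
  have hB0 : (0 : ℝ) ≤ B := by positivity
  have hB2 : B ^ 2 = (p : ℝ) ^ (n ^ 2) * (p : ℝ) ^ K := by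
    have h1 : B = (p : ℝ) ^ (((n ^ 2 : ℕ) : ℝ) + -(((n ^ 2 : ℝ) - (K : ℝ)) / 2)) := by
      rw [Real.rpow_add hp0, Real.rpow_natCast]
    have h2 : (p : ℝ) ^ (n ^ 2) * (p : ℝ) ^ K
        = (p : ℝ) ^ (((n ^ 2 : ℕ) : ℝ) + ((K : ℕ) : ℝ)) := by
      rw [Real.rpow_add hp0, Real.rpow_natCast, Real.rpow_natCast]
    rw [h1, h2, ← Real.rpow_natCast ((p : ℝ) ^ (((n ^ 2 : ℕ) : ℝ) + -(((n ^ 2 : ℝ) - (K : ℝ)) / 2))) 2,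
      ← Real.rpow_mul hp0.le]
    congr 1
    push_cast
    ring
  have hle : A ^ 2 ≤ B ^ 2 := by rw [hB2]; exact hb
  calc A = Real.sqrt (A ^ 2) := (Real.sqrt_sq hA0).symm
    _ ≤ Real.sqrt (B ^ 2) := Real.sqrt_le_sqrt hle
    _ = B := Real.sqrt_sq hB0
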